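/- There exists a universal constant ζ ∈ (0,1] such that for every μ > 0, ∫_ζ^∞ (e^{−(x−μ)²/2} − e^{−(x+μ)²/2}) dx ≥ ζ · ∫_0^∞ (e^{−(x−μ)²/2} − e^{−(x+μ)²/2}) dx. Equivalently, a random variable Y with law ν̄₁^μ (the probability measure on [0,∞) with density proportional to e^{−(x−μ)²/2} − e^{−(x+μ)²/2} on x ≥ 0) stochastically dominates ζ·Ber(ζ), uniformly in μ > 0. -/

import Mathlib

open MeasureTheory

private theorem sticky_core (a b : ℝ) (ha : 1 ≤ a) (hab : a ≤ b) :
    2 * (a - a⁻¹) ≤ a * b - (a * b)⁻¹ := by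
  have ha0 : 0 < a := by linarith
  have hb0 : 0 < b := by linarith
  have h1 : a * a - (a*a)⁻¹ - 2*(a - a⁻¹) = (a - a⁻¹) * (a + a⁻¹ - 2) := by
    field_simp; ring
  have hia : 0 < a⁻¹ := inv_pos.mpr ha0
  have h2 : 0 ≤ (a - a⁻¹) * (a + a⁻¹ - 2) := by
    apply mul_nonneg
    · have : a⁻¹ ≤ 1 := by rw [inv_le_one_iff₀]; right; exact ha
      linarith
    · nlinarith [mul_nonneg hia.le (sq_nonneg (a - 1)), mul_inv_cancel₀ ha0.ne']
  have h3 : a * a - (a*a)⁻¹ ≤ a * b - (a*b)⁻¹ := by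
    have : (a*b)⁻¹ ≤ (a*a)⁻¹ := by
      apply inv_anti₀ (by positivity)
      nlinarith
    nlinarith
  linarith

private theorem sticky_pointwise (μ x : ℝ) (hμ : 0 < μ) (hx : 0 < x) (hx2 : x ≤ 1/2) :
    Real.exp (-(x - μ)^2/2) - Real.exp (-(x + μ)^2/2)
      ≤ Real.exp (-(x + 1/2 - μ)^2/2) - Real.exp (-(x + 1/2 + μ)^2/2) := by
  have ha1 : 1 ≤ Real.exp (x*μ) := Real.one_le_exp (by positivity)
  have hab : Real.exp (x*μ) ≤ Real.exp (μ/2) := Real.exp_le_exp.mpr (by nlinarith)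
  have hcore := sticky_core (Real.exp (x*μ)) (Real.exp (μ/2)) ha1 hab
  have hc' : 0 < Real.exp (-((x+1/2)^2 + μ^2)/2) := Real.exp_pos _
  have hfac : Real.exp (-(x^2+μ^2)/2) ≤ 2 * Real.exp (-((x+1/2)^2+μ^2)/2) := by
    rw [show -(x^2+μ^2)/2 = -((x+1/2)^2+μ^2)/2 + (x+1/4)/2 by ring, Real.exp_add]
    have h38 : Real.exp ((x+1/4)/2) ≤ 2 := by
      have h1 : (x+1/4)/2 ≤ Real.log 2 := by
        have := Real.log_two_gt_d9
        linarith
      calc Real.exp ((x+1/4)/2) ≤ Real.exp (Real.log 2) := Real.exp_le_exp.mpr h1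
        _ = 2 := Real.exp_log (by norm_num)
    nlinarith
  have L1 : Real.exp (-(x - μ)^2/2) = Real.exp (-(x^2+μ^2)/2) * Real.exp (x*μ) := by
    rw [← Real.exp_add]; congr 1; ring
  have L2 : Real.exp (-(x + μ)^2/2) = Real.exp (-(x^2+μ^2)/2) * (Real.exp (x*μ))⁻¹ := by
    rw [← Real.exp_neg, ← Real.exp_add]; congr 1; ring
  have R1 : Real.exp (-(x + 1/2 - μ)^2/2)
      = Real.exp (-((x+1/2)^2+μ^2)/2) * (Real.exp (x*μ) * Real.exp (μ/2)) := by
    rw [← Real.exp_add, ← Real.exp_add]; congr 1; ring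
  have R2 : Real.exp (-(x + 1/2 + μ)^2/2)
      = Real.exp (-((x+1/2)^2+μ^2)/2) * (Real.exp (x*μ) * Real.exp (μ/2))⁻¹ := by
    rw [← Real.exp_add, ← Real.exp_neg, ← Real.exp_add]; congr 1; ring
  rw [L1, L2, R1, R2]
  have hdiff : 0 ≤ Real.exp (x*μ) - (Real.exp (x*μ))⁻¹ := by
    have : (Real.exp (x*μ))⁻¹ ≤ 1 := by
      rw [inv_le_one_iff₀]; right; exact ha1
    linarith
  nlinarith [mul_le_mul_of_nonneg_right hfac hdiff, mul_le_mul_of_nonneg_left hcore hc'.le]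

/-- Stochastic domination of the sticky-coupling discrepancy: there is a universal `ζ ∈ (0,1]`
such that for every `μ > 0`, a random variable with the normalized density
`∝ e^{−(x−μ)²/2} − e^{−(x+μ)²/2}` on `x ≥ 0` stochastically dominates `ζ·Ber(ζ)`; equivalently,
its mass on `(ζ,∞)` is at least `ζ` times its total mass. -/
theorem sticky_discrepancy_dominates_bernoulli :
    ∃ ζ : ℝ, 0 < ζ ∧ ζ ≤ 1 ∧ ∀ μ : ℝ, 0 < μ →
      ζ * ∫ x in Set.Ioi (0 : ℝ),
            (Real.exp (-(x - μ) ^ 2 / 2) - Real.exp (-(x + μ) ^ 2 / 2))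
        ≤ ∫ x in Set.Ioi ζ,
            (Real.exp (-(x - μ) ^ 2 / 2) - Real.exp (-(x + μ) ^ 2 / 2)) := by
  refine ⟨1/2, by norm_num, by norm_num, fun μ hμ => ?_⟩
  set f : ℝ → ℝ := fun x => Real.exp (-(x - μ)^2/2) - Real.exp (-(x + μ)^2/2) with hf_def
  have hg : ∀ c : ℝ, Integrable (fun x : ℝ => Real.exp (-(x - c)^2/2)) := by
    intro c
    have h := (integrable_exp_neg_mul_sq (by norm_num : (0:ℝ) < 1/2)).comp_sub_right c
    convert h using 2 with x
    congr 1; ring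
  have hf : Integrable f := by
    have h2 : Integrable (fun x : ℝ => Real.exp (-(x + μ)^2/2)) := by
      have := hg (-μ); simpa [sub_neg_eq_add] using this
    exact (hg μ).sub h2
  have hsplit : (∫ x in Set.Ioi (0:ℝ), f x)
      = (∫ x in Set.Ioc (0:ℝ) (1/2), f x) + ∫ x in Set.Ioi (1/2:ℝ), f x := by
    rw [← setIntegral_union (Set.Ioc_disjoint_Ioi le_rfl) measurableSet_Ioi
      hf.integrableOn hf.integrableOn,
      Set.Ioc_union_Ioi_eq_Ioi (by norm_num : (0:ℝ) ≤ 1/2)]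
  have hshift : Integrable (fun x : ℝ => f (x + 1/2)) := hf.comp_add_right (1/2)
  have step1 : (∫ x in Set.Ioc (0:ℝ) (1/2), f x)
      ≤ ∫ x in Set.Ioc (0:ℝ) (1/2), f (x + 1/2) := by
    refine setIntegral_mono_on hf.integrableOn hshift.integrableOn measurableSet_Ioc ?_
    intro x hx
    exact sticky_pointwise μ x hμ hx.1 hx.2
  have step2 : (∫ x in Set.Ioc (0:ℝ) (1/2), f (x + 1/2))
      = ∫ x in Set.Ioc (1/2:ℝ) 1, f x := by
    rw [← intervalIntegral.integral_of_le (by norm_num : (0:ℝ) ≤ 1/2),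
      intervalIntegral.integral_comp_add_right f (1/2)]
    norm_num
    rw [intervalIntegral.integral_of_le (by norm_num : (1/2:ℝ) ≤ 1)]
  have step3 : (∫ x in Set.Ioc (1/2:ℝ) 1, f x) ≤ ∫ x in Set.Ioi (1/2:ℝ), f x := by
    refine setIntegral_mono_set hf.integrableOn ?_
      (HasSubset.Subset.eventuallyLE Set.Ioc_subset_Ioi_self)
    refine (ae_restrict_iff' measurableSet_Ioi).mpr (Filter.Eventually.of_forall ?_)
    intro x hx
    simp only [Set.mem_Ioi] at hx
    have : -(x + μ)^2/2 ≤ -(x - μ)^2/2 := by nlinarith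
    simp only [hf_def, Pi.zero_apply, sub_nonneg]
    exact Real.exp_le_exp.mpr this
  calc 1/2 * ∫ x in Set.Ioi (0:ℝ), f x
      = 1/2 * ((∫ x in Set.Ioc (0:ℝ) (1/2), f x) + ∫ x in Set.Ioi (1/2:ℝ), f x) := by
        rw [hsplit]
    _ ≤ ∫ x in Set.Ioi (1/2:ℝ), f x := by linarith
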